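/- Let G be a graph with a perfect matching M and let e be an edge of G not in M. Then e is an anti-forcing edge of G (i.e., G − e has a unique perfect matching) if and only if every M-alternating cycle of G passes through e. -/

import Mathlib

open scoped Classical

variable {V : Type*} [Fintype V] [DecidableEq V]

/-- `M` is a perfect matching of `G`: a set of edges of `G` such that every
vertex lies in exactly one edge of `M`. -/
def IsPM (G : SimpleGraph V) (M : Set (Sym2 V)) : Prop :=
  M ⊆ G.edgeSet ∧ ∀ v : V, ∃! e, e ∈ M ∧ v ∈ e

/-- `M` is the unique perfect matching of `G`. -/
def IsUniquePM (G : SimpleGraph V) (M : Set (Sym2 V)) : Prop :=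
  IsPM G M ∧ ∀ M', IsPM G M' → M' = M

/-- A closed walk `c` is an `M`-alternating cycle: it is a cycle of even length
whose edges lie alternately in `M` and outside `M`. -/
def IsAltCycle {G : SimpleGraph V} (M : Set (Sym2 V)) {v : V} (c : G.Walk v v) : Prop :=
  c.IsCycle ∧ Even c.edges.length ∧
    ((∀ i (h : i < c.edges.length), c.edges.get ⟨i, h⟩ ∈ M ↔ Even i) ∨
     (∀ i (h : i < c.edges.length), c.edges.get ⟨i, h⟩ ∈ M ↔ ¬ Even i))

/-- `S` is an anti-forcing set of the perfect matching `M` of `G`: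
`S` consists of edges of `G` not in `M` and `M` is the unique perfect matching
of `G - S`. -/
def IsAntiForcingSet (G : SimpleGraph V) (M S : Set (Sym2 V)) : Prop :=
  S ⊆ G.edgeSet \ M ∧ IsUniquePM (G.deleteEdges S) M

/-- The anti-forcing number of a perfect matching `M` of `G`. -/
noncomputable def af (G : SimpleGraph V) (M : Set (Sym2 V)) : ℕ :=
  sInf {n | ∃ S : Finset (Sym2 V), S.card = n ∧ IsAntiForcingSet G M ↑S}


section Aux

set_option linter.unusedSectionVars false
set_option maxHeartbeats 1000000

variable {G : SimpleGraph V}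

lemma IsPM.exists_partner {M : Set (Sym2 V)} (hM : IsPM G M) (v : V) :
    ∃ w, s(v, w) ∈ M ∧ w ≠ v ∧ ∀ f ∈ M, v ∈ f → f = s(v, w) := by
  obtain ⟨f, ⟨hfM, hvf⟩, huniq⟩ := hM.2 v
  have hnd : ¬ f.IsDiag := G.not_isDiag_of_mem_edgeSet (hM.1 hfM)
  refine ⟨Sym2.Mem.other' hvf, ?_, ?_, ?_⟩
  · rw [Sym2.other_spec' hvf]; exact hfM
  · intro h
    apply hnd
    rw [← Sym2.other_spec' hvf, h]
    simp [Sym2.mk_isDiag_iff]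
  · intro g hg hvg
    rw [Sym2.other_spec' hvf]
    exact huniq g ⟨hg, hvg⟩

def altSeq (m m' : V → V) (x : V) : ℕ → V
  | 0 => x
  | n + 1 => if Even n then m (altSeq m m' x n) else m' (altSeq m m' x n)

namespace SimpleGraph.Walk

lemma edges_get_eq_getVert {u v : V} (p : G.Walk u v) (i : ℕ) (h : i < p.edges.length) :
    p.edges.get ⟨i, h⟩ = s(p.getVert i, p.getVert (i + 1)) := by
  induction p generalizing i with
  | nil => simp at h
  | cons hadj q ih =>
    cases i with
    | zero => simp [getVert_cons_succ, getVert_zero]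
    | succ n =>
      simp only [edges_cons, List.get_cons_succ, getVert_cons_succ]
      exact ih n _

lemma support_get_eq_getVert {u v : V} (p : G.Walk u v) (i : ℕ) (h : i < p.support.length) :
    p.support.get ⟨i, h⟩ = p.getVert i := by
  induction p generalizing i with
  | nil =>
    simp only [support_nil, List.length_singleton] at h
    interval_cases i
    · simp [getVert_zero]
  | cons hadj q ih =>
    cases i with
    | zero => simp
    | succ n =>
      simp only [support_cons, List.get_cons_succ, getVert_cons_succ]
      exact ih n _

lemma cycle_getVert_inj {v : V} {c : G.Walk v v} (hc : c.IsCycle) {i j : ℕ} (hij : i < j)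
    (hj : j ≤ c.length) (h : c.getVert i = c.getVert j) : i = 0 ∧ j = c.length := by
  have hnd : c.support.tail.Nodup := hc.support_nodup
  have hsl : c.support.length = c.length + 1 := c.length_support
  have htail : ∀ (t : ℕ) (ht : t < c.support.tail.length),
      c.support.tail.get ⟨t, ht⟩ = c.getVert (t + 1) := by
    intro t ht
    have ht' : t + 1 < c.support.length := by
      have := c.support.length_tail
      omega
    have := c.support_get_eq_getVert (t + 1) ht'
    rw [← this]
    rw [List.get_tail]
  have hlt : c.support.tail.length = c.length := by
    have := c.support.length_tail
    omega
  have key : ∀ a b : ℕ, 1 ≤ a → a ≤ c.length → 1 ≤ b → b ≤ c.length →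
      c.getVert a = c.getVert b → a = b := by
    intro a b ha ha' hb hb' hab
    have h1 : a - 1 < c.support.tail.length := by omega
    have h2 : b - 1 < c.support.tail.length := by omega
    have e1 := htail (a - 1) h1
    have e2 := htail (b - 1) h2
    rw [show a - 1 + 1 = a by omega] at e1
    rw [show b - 1 + 1 = b by omega] at e2
    have : c.support.tail.get ⟨a-1, h1⟩ = c.support.tail.get ⟨b-1, h2⟩ := by
      rw [e1, e2, hab]
    have := (List.Nodup.get_inj_iff hnd).mp this
    have := Fin.val_eq_val _ _ |>.mpr this
    simp at this
    omega
  by_cases hi0 : i = 0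
  · subst hi0
    have hv : c.getVert j = c.getVert c.length := by
      rw [← h, getVert_zero, getVert_length]
    rcases Nat.eq_or_lt_of_le hj with rfl | hjlt
    · exact ⟨rfl, rfl⟩
    · exfalso
      have := key j c.length (by omega) (by omega) (by omega) (le_refl _) hv
      omega
  · exfalso
    have := key i j (by omega) (by omega) (by omega) hj h
    omega

end SimpleGraph.Walk

namespace SimpleGraph.Walk

/-- build a walk along a sequence of vertices -/
def ofSeq (f : ℕ → V) (hf : ∀ n, G.Adj (f n) (f (n + 1))) : (k : ℕ) → G.Walk (f 0) (f k)
  | 0 => .nil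
  | k + 1 => (ofSeq f hf k).concat (hf k)

@[simp] lemma ofSeq_length (f : ℕ → V) (hf : ∀ n, G.Adj (f n) (f (n + 1))) (k : ℕ) :
    (ofSeq f hf k : G.Walk _ _).length = k := by
  induction k with
  | zero => rfl
  | succ k ih => simp [ofSeq, ih]

@[simp] lemma ofSeq_edges (f : ℕ → V) (hf : ∀ n, G.Adj (f n) (f (n + 1))) (k : ℕ) :
    (ofSeq f hf k : G.Walk _ _).edges = (List.range k).map (fun n => s(f n, f (n + 1))) := by
  induction k with
  | zero => rfl
  | succ k ih => simp [ofSeq, ih, List.range_succ]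

@[simp] lemma ofSeq_support (f : ℕ → V) (hf : ∀ n, G.Adj (f n) (f (n + 1))) (k : ℕ) :
    (ofSeq f hf k : G.Walk _ _).support = (List.range (k + 1)).map f := by
  induction k with
  | zero => rfl
  | succ k ih => simp [ofSeq, ih, List.range_succ]

end SimpleGraph.Walk

open SimpleGraph Walk

lemma forward_dir (G : SimpleGraph V) (M : Set (Sym2 V)) (hM : IsPM G M)
    (e : Sym2 V) (he : e ∈ G.edgeSet) (heM : e ∉ M)
    (hEx : ∃ N, IsUniquePM (G.deleteEdges {e}) N) :
    ∀ (v : V) (c : G.Walk v v), IsAltCycle M c → e ∈ c.edges := by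
  obtain ⟨N, hN⟩ := hEx
  -- M is a PM of G - e
  have hMdel : IsPM (G.deleteEdges {e}) M := by
    constructor
    · intro f hf
      rw [SimpleGraph.edgeSet_deleteEdges]
      refine ⟨hM.1 hf, ?_⟩
      simp only [Set.mem_singleton_iff]
      rintro rfl; exact heM hf
    · exact hM.2
  have hMN : M = N := hN.2 M hMdel
  intro v c hAlt
  by_contra hnot
  obtain ⟨hcyc, heven, halt⟩ := hAlt
  have hne : c.edges.length = c.length := c.length_edges
  have h3 : 3 ≤ c.length := hcyc.three_le_length
  have hnEven : c.length % 2 = 0 := by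
    rw [hne] at heven; rwa [Nat.even_iff] at heven
  set n := c.length with hndef
  -- the i-th edge
  set Eg : ℕ → Sym2 V := fun i => s(c.getVert i, c.getVert (i + 1)) with hEg
  have hEget : ∀ (i : ℕ) (h : i < c.edges.length), c.edges.get ⟨i, h⟩ = Eg i := by
    intro i h; exact c.edges_get_eq_getVert i h
  have hEmem : ∀ i, i < n → Eg i ∈ c.edges := by
    intro i h
    have h' : i < c.edges.length := by omega
    rw [← hEget i h']
    exact List.get_mem _ _
  -- alternation: opposite parity edges have opposite M-membership
  have honeM : ∀ i j, i < n → j < n → ((Even i) ↔ ¬ (Even j)) → (Eg i ∈ M ↔ ¬ Eg j ∈ M) := by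
    rcases halt with hA | hA <;>
    · intro i j hi hj hp
      have h'i : i < c.edges.length := by omega
      have h'j : j < c.edges.length := by omega
      rw [← hEget i h'i, ← hEget j h'j, hA i h'i, hA j h'j]
      tauto
  -- membership of a vertex in an edge
  have hmemE : ∀ (u : V) i, u ∈ Eg i ↔ u = c.getVert i ∨ u = c.getVert (i + 1) :=
    fun u i => Sym2.mem_iff
  -- injectivity of getVert on [0, n)
  have hinj : ∀ i j, i < n → j < n → c.getVert i = c.getVert j → i = j := by
    intro i j hi hj h
    rcases lt_trichotomy i j with hlt | rfl | hlt
    · have := cycle_getVert_inj hcyc hlt (by omega) h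
      omega
    · rfl
    · have := cycle_getVert_inj hcyc hlt (by omega) h.symm
      omega
  have hinj' : ∀ i p, i ≤ n → p < n → c.getVert i = c.getVert p → i = p ∨ (i = n ∧ p = 0) := by
    intro i p hi hp h
    rcases Nat.eq_or_lt_of_le hi with rfl | hi
    · right
      refine ⟨rfl, ?_⟩
      by_contra hp0
      have hv : c.getVert 0 = c.getVert p := by
        rw [Walk.getVert_zero, ← h]
        exact (Walk.getVert_length c).symm
      have := cycle_getVert_inj hcyc (show 0 < p by omega) (by omega) hv
      omega
    · left; exact hinj i p hi hp h
  -- the incidence structure at a cycle vertex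
  have hinc : ∀ p, p < n → ∃ q, q < n ∧ q ≠ p ∧ (Even p ↔ ¬ Even q) ∧
      c.getVert p ∈ Eg p ∧ c.getVert p ∈ Eg q ∧
      (∀ i, i < n → c.getVert p ∈ Eg i → i = p ∨ i = q) := by
    intro p hp
    refine ⟨if p = 0 then n - 1 else p - 1, ?_, ?_, ?_, ?_, ?_, ?_⟩
    · split <;> omega
    · split <;> omega
    · rw [Nat.even_iff, Nat.even_iff]
      split <;> (constructor <;> intro h1 <;> omega)
    · rw [hmemE]; left; rfl
    · rw [hmemE]
      by_cases hp0 : p = 0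
      · right
        rw [if_pos hp0, show n - 1 + 1 = n by omega, hp0, Walk.getVert_zero]
        exact (Walk.getVert_length c).symm
      · right
        rw [if_neg hp0, show p - 1 + 1 = p by omega]
    · intro i hi hu
      rw [hmemE] at hu
      rcases hu with h | h
      · left; exact hinj i p hi hp h.symm
      · rcases hinj' (i + 1) p (by omega) hp h.symm with h1 | ⟨h1, h2⟩
        · right; rw [if_neg (by omega)]; omega
        · right; rw [if_pos h2]; omega
  -- exactly one of the two incident edges is in M, and the other is not
  have hsel : ∀ p, p < n → ∃ a b, a < n ∧ b < n ∧ Eg a ∈ M ∧ Eg b ∉ M ∧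
      c.getVert p ∈ Eg a ∧ c.getVert p ∈ Eg b ∧
      (∀ i, i < n → c.getVert p ∈ Eg i → i = a ∨ i = b) := by
    intro p hp
    obtain ⟨q, hq, hqp, hpar, hup, huq, huniq⟩ := hinc p hp
    have hone : Eg p ∈ M ↔ ¬ Eg q ∈ M := honeM p q hp hq hpar
    by_cases hc : Eg p ∈ M
    · exact ⟨p, q, hp, hq, hc, hone.mp hc, hup, huq, huniq⟩
    · refine ⟨q, p, hq, hp, ?_, hc, huq, hup, fun i hi hu => (huniq i hi hu).symm⟩
      by_contra h
      exact hc (hone.mpr h)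
  -- support membership
  have hsupp : ∀ u : V, u ∈ c.support ↔ ∃ p, p < n ∧ c.getVert p = u := by
    intro u
    rw [Walk.mem_support_iff_exists_getVert]
    constructor
    · rintro ⟨p, hpu, hpn⟩
      rcases Nat.eq_or_lt_of_le hpn with rfl | hlt
      · exact ⟨0, by omega, by rw [Walk.getVert_zero, ← hpu, Walk.getVert_length]⟩
      · exact ⟨p, hlt, hpu⟩
    · rintro ⟨p, h1, h2⟩; exact ⟨p, h2, by omega⟩
  -- an edge of the cycle containing u forces u on the cycle
  have hCsupp : ∀ (u : V) (f : Sym2 V), f ∈ c.edges → u ∈ f → u ∈ c.support := by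
    intro u f hf hu
    obtain ⟨⟨i, hilen⟩, hfi⟩ := List.mem_iff_get.mp hf
    rw [hEget i hilen] at hfi
    rw [← hfi, hmemE] at hu
    rw [hsupp]
    rcases hu with h | h
    · exact ⟨i, by omega, h.symm⟩
    · by_cases hiend : i + 1 < n
      · exact ⟨i + 1, hiend, h.symm⟩
      · refine ⟨0, by omega, ?_⟩
        rw [Walk.getVert_zero, h, show i + 1 = n by omega]
        exact (Walk.getVert_length c).symm
  -- the symmetric difference
  set C : Set (Sym2 V) := {f | f ∈ c.edges} with hC
  set M' : Set (Sym2 V) := (M \ C) ∪ (C \ M) with hM'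
  have hM'pm : IsPM (G.deleteEdges {e}) M' := by
    constructor
    · rintro f (⟨hfM, -⟩ | ⟨hfC, -⟩)
      · rw [SimpleGraph.edgeSet_deleteEdges]
        refine ⟨hM.1 hfM, ?_⟩
        simp only [Set.mem_singleton_iff]
        rintro rfl; exact heM hfM
      · rw [SimpleGraph.edgeSet_deleteEdges]
        refine ⟨c.edges_subset_edgeSet hfC, ?_⟩
        simp only [Set.mem_singleton_iff]
        rintro rfl; exact hnot hfC
    · intro u
      by_cases hu : u ∈ c.support
      · obtain ⟨p, hpn, hpu⟩ := (hsupp u).mp hu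
        obtain ⟨a, b, ha, hb, haM, hbM, hua, hub, huniq⟩ := hsel p hpn
        rw [hpu] at hua hub huniq
        refine ⟨Eg b, ⟨Or.inr ⟨hEmem b hb, hbM⟩, hub⟩, ?_⟩
        rintro g ⟨(⟨hgM, hgC⟩ | ⟨hgC, hgM⟩), hug⟩
        · exfalso
          obtain ⟨f, hf, hfu⟩ := hM.2 u
          have h1 : g = f := hfu g ⟨hgM, hug⟩
          have h2 : Eg a = f := hfu (Eg a) ⟨haM, hua⟩
          exact hgC (show g ∈ C by rw [h1, ← h2]; exact hEmem a ha)
        · obtain ⟨⟨i, hilen⟩, hfi⟩ := List.mem_iff_get.mp (show g ∈ c.edges from hgC)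
          rw [hEget i hilen] at hfi
          rcases huniq i (by omega) (by rw [hfi]; exact hug) with rfl | rfl
          · exact absurd (hfi ▸ haM) hgM
          · exact hfi.symm
      · obtain ⟨f, ⟨hfM, huf⟩, hfu⟩ := hM.2 u
        have hfC : f ∉ C := fun h => hu (hCsupp u f h huf)
        refine ⟨f, ⟨Or.inl ⟨hfM, hfC⟩, huf⟩, ?_⟩
        rintro g ⟨(⟨hgM, -⟩ | ⟨hgC, hgM⟩), hug⟩
        · exact hfu g ⟨hgM, hug⟩
        · exact absurd (hCsupp u g hgC hug) hu
  have hM'M : M' = M := by rw [hN.2 M' hM'pm, ← hMN]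
  obtain ⟨a, b, ha, hb, haM, hbM, hua, hub, huniq⟩ := hsel 0 (by omega)
  have : Eg b ∈ M' := Or.inr ⟨hEmem b hb, hbM⟩
  rw [hM'M] at this
  exact hbM this

lemma backward_dir (G : SimpleGraph V) (M : Set (Sym2 V)) (hM : IsPM G M)
    (e : Sym2 V) (he : e ∈ G.edgeSet) (heM : e ∉ M)
    (hyp : ∀ (v : V) (c : G.Walk v v), IsAltCycle M c → e ∈ c.edges) :
    ∃ N, IsUniquePM (G.deleteEdges {e}) N := by
  have hMdel : IsPM (G.deleteEdges {e}) M := by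
    constructor
    · intro f hf
      rw [SimpleGraph.edgeSet_deleteEdges]
      refine ⟨hM.1 hf, ?_⟩
      simp only [Set.mem_singleton_iff]
      rintro rfl; exact heM hf
    · exact hM.2
  refine ⟨M, hMdel, ?_⟩
  intro M' hM'
  by_contra hneq
  have hsub' : M' ⊆ G.edgeSet := by
    intro f hf
    have := hM'.1 hf
    rw [SimpleGraph.edgeSet_deleteEdges] at this
    exact this.1
  have heM' : e ∉ M' := by
    intro h
    have := hM'.1 h
    rw [SimpleGraph.edgeSet_deleteEdges] at this
    exact this.2 rfl
  -- an edge in M \ M'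
  have hMM' : ∃ f, f ∈ M ∧ f ∉ M' := by
    by_contra h
    push_neg at h
    apply hneq
    apply Set.Subset.antisymm
    · intro f hf
      have hrep : ∃ x y, f = s(x, y) := by
        induction f using Sym2.ind with | _ x y => exact ⟨x, y, rfl⟩
      obtain ⟨x, y, rfl⟩ := hrep
      obtain ⟨g, ⟨hgM, hxg⟩, hgu⟩ := hM.2 x
      obtain ⟨g', ⟨hg'M, hxg'⟩, hg'u⟩ := hM'.2 x
      have h1 : s(x, y) = g' := hg'u _ ⟨hf, Sym2.mem_mk_left x y⟩
      have h2 : g = g' := hg'u _ ⟨h g hgM, hxg⟩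
      rw [h1, ← h2]; exact hgM
    · exact h
  obtain ⟨f₀, hf0M, hf0M'⟩ := hMM'
  choose m hm1 hm2 hm3 using hM.exists_partner
  choose m' hm'1 hm'2 hm'3 using hM'.exists_partner
  -- involutions
  have hmm : ∀ x, m (m x) = x := by
    intro x
    have h2 := hm3 (m x) _ (hm1 x) (Sym2.mem_mk_right x (m x))
    have h3 : s(m x, x) = s(m x, m (m x)) := by rw [Sym2.eq_swap]; exact h2
    exact (Sym2.congr_right.mp h3).symm
  have hmm' : ∀ x, m' (m' x) = x := by
    intro x
    have h2 := hm'3 (m' x) _ (hm'1 x) (Sym2.mem_mk_right x (m' x))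
    have h3 : s(m' x, x) = s(m' x, m' (m' x)) := by rw [Sym2.eq_swap]; exact h2
    exact (Sym2.congr_right.mp h3).symm
  -- the starting vertex
  have hrep : ∃ x y, f₀ = s(x, y) := by
    induction f₀ using Sym2.ind with | _ x y => exact ⟨x, y, rfl⟩
  obtain ⟨x₀, y₀, rfl⟩ := hrep
  have hx0 : s(x₀, y₀) = s(x₀, m x₀) := hm3 x₀ _ hf0M (Sym2.mem_mk_left _ _)
  set g : ℕ → V := altSeq m m' x₀ with hgdef
  have hg0 : g 0 = x₀ := rfl
  have hgs : ∀ k, g (k + 1) = if Even k then m (g k) else m' (g k) := fun k => rfl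
  -- the alternating edge invariant
  have hInv : ∀ k, (Even k → s(g k, g (k+1)) ∈ M ∧ s(g k, g (k+1)) ∉ M') ∧
      (¬ Even k → s(g k, g (k+1)) ∈ M' ∧ s(g k, g (k+1)) ∉ M) := by
    intro k
    induction k with
    | zero =>
      constructor
      · intro _
        have h1 : g 1 = m x₀ := by rw [hgs 0, if_pos Even.zero, hg0]
        rw [hg0, h1]
        refine ⟨hm1 x₀, ?_⟩
        rw [← hx0]; exact hf0M'
      · intro h; exact absurd Even.zero h
    | succ k ih =>
      by_cases hk : Even k
      · obtain ⟨h1, h2⟩ := ih.1 hk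
        constructor
        · intro h; exact absurd hk (Nat.even_add_one.mp h)
        · intro _
          have hg2 : g (k+2) = m' (g (k+1)) := by
            rw [hgs (k+1), if_neg (by simp [Nat.even_add_one, hk])]
          have hin : s(g (k+1), g (k+2)) ∈ M' := by rw [hg2]; exact hm'1 (g (k+1))
          refine ⟨hin, ?_⟩
          intro hinM
          have e1 : s(g (k+1), g (k+2)) = s(g (k+1), m (g (k+1))) :=
            hm3 _ _ hinM (Sym2.mem_mk_left _ _)
          have e2 : s(g (k+1), g k) = s(g (k+1), m (g (k+1))) :=
            hm3 _ _ (by rw [Sym2.eq_swap]; exact h1) (Sym2.mem_mk_left _ _)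
          apply h2
          rw [show s(g k, g (k+1)) = s(g (k+1), g k) from Sym2.eq_swap, e2, ← e1]
          exact hin
      · obtain ⟨h1, h2⟩ := ih.2 hk
        constructor
        · intro _
          have hg2 : g (k+2) = m (g (k+1)) := by
            rw [hgs (k+1), if_pos (Nat.even_add_one.mpr hk)]
          have hin : s(g (k+1), g (k+2)) ∈ M := by rw [hg2]; exact hm1 (g (k+1))
          refine ⟨hin, ?_⟩
          intro hinM'
          have e1 : s(g (k+1), g (k+2)) = s(g (k+1), m' (g (k+1))) :=
            hm'3 _ _ hinM' (Sym2.mem_mk_left _ _)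
          have e2 : s(g (k+1), g k) = s(g (k+1), m' (g (k+1))) :=
            hm'3 _ _ (by rw [Sym2.eq_swap]; exact h1) (Sym2.mem_mk_left _ _)
          apply h2
          rw [show s(g k, g (k+1)) = s(g (k+1), g k) from Sym2.eq_swap, e2, ← e1]
          exact hin
        · intro h; exact absurd (Nat.even_add_one.mpr hk) h
  -- adjacency along the sequence
  have hgadj : ∀ k, G.Adj (g k) (g (k+1)) := by
    intro k
    by_cases h : Even k
    · exact (SimpleGraph.mem_edgeSet G).mp (hM.1 ((hInv k).1 h).1)
    · exact (SimpleGraph.mem_edgeSet G).mp (hsub' ((hInv k).2 h).1)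
  have hgne : ∀ k, g k ≠ g (k+1) := fun k => (hgadj k).ne
  have hgne2 : ∀ k, g k ≠ g (k+2) := by
    intro k h
    by_cases hk : Even k
    · have a1 := ((hInv k).1 hk).2
      have a2 := ((hInv (k+1)).2 (by simp [Nat.even_add_one, hk])).1
      apply a1
      rw [show s(g k, g (k+1)) = s(g (k+1), g k) from Sym2.eq_swap, h]
      exact a2
    · have a1 := ((hInv k).2 hk).2
      have a2 := ((hInv (k+1)).1 (Nat.even_add_one.mpr hk)).1
      apply a1
      rw [show s(g k, g (k+1)) = s(g (k+1), g k) from Sym2.eq_swap, h]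
      exact a2
  -- backwards determinism
  have hback : ∀ k, g k = if Even k then m (g (k+1)) else m' (g (k+1)) := by
    intro k
    by_cases h : Even k
    · rw [if_pos h, hgs k, if_pos h, hmm]
    · rw [if_neg h, hgs k, if_neg h, hmm']
  -- backwards shift
  have hshift : ∀ i j, i ≤ j → i % 2 = j % 2 → g i = g j →
      ∀ t, t ≤ i → g (i - t) = g (j - t) := by
    intro i j hij hmod heq t
    induction t with
    | zero => intro _; simpa using heq
    | succ t ih =>
      intro ht
      have h1 := ih (by omega)
      have e1 : i - t = (i - (t+1)) + 1 := by omega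
      have e2 : j - t = (j - (t+1)) + 1 := by omega
      have hpar : Even (i - (t+1)) ↔ Even (j - (t+1)) := by
        rw [Nat.even_iff, Nat.even_iff]; omega
      have b1 := hback (i - (t+1))
      have b2 := hback (j - (t+1))
      rw [← e1] at b1
      rw [← e2] at b2
      by_cases hp : Even (i - (t+1))
      · rw [if_pos hp] at b1
        rw [if_pos (hpar.mp hp)] at b2
        rw [b1, b2, h1]
      · rw [if_neg hp] at b1
        rw [if_neg (fun hh => hp (hpar.mpr hh))] at b2
        rw [b1, b2, h1]
  -- pigeonhole: a positive even return time to x₀ exists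
  have hpig : ∃ k, 0 < k ∧ g k = x₀ ∧ k % 2 = 0 := by
    obtain ⟨i, j, hij, hq⟩ :=
      Finite.exists_ne_map_eq_of_infinite (fun t : ℕ => (g t, decide (t % 2 = 0)))
    simp only [Prod.mk.injEq, decide_eq_decide] at hq
    have hmod : i % 2 = j % 2 := by omega
    have main : ∀ a b : ℕ, a < b → g a = g b → a % 2 = b % 2 →
        ∃ k, 0 < k ∧ g k = x₀ ∧ k % 2 = 0 := by
      intro a b hab hg hm2
      have := hshift a b (by omega) hm2 hg a (le_refl a)
      rw [Nat.sub_self] at this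
      exact ⟨b - a, by omega, by rw [← this]; exact hg0, by omega⟩
    rcases Ne.lt_or_gt hij with h | h
    · exact main i j h hq.1 hmod
    · exact main j i h hq.1.symm hmod.symm
  let k := Nat.find hpig
  obtain ⟨hk0, hgk, hkmod⟩ : 0 < k ∧ g k = x₀ ∧ k % 2 = 0 := Nat.find_spec hpig
  have hkmin : ∀ t, t < k → ¬(0 < t ∧ g t = x₀ ∧ t % 2 = 0) :=
    fun t ht => Nat.find_min hpig ht
  have hk2 : k ≠ 2 := by
    intro h
    exact hgne2 0 (hg0.trans (h ▸ hgk).symm)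
  have hk4 : 4 ≤ k := by omega
  -- injectivity over one period
  have hginj : ∀ i j, i < j → j < k → g i ≠ g j := by
    intro i j hij hjk heq
    by_cases hpar : i % 2 = j % 2
    · have := hshift i j (by omega) hpar heq i (le_refl i)
      rw [Nat.sub_self] at this
      exact hkmin (j - i) (by omega) ⟨by omega, by rw [← this]; exact hg0, by omega⟩
    · -- reflection argument
      have hrefl : ∀ t, t ≤ j - i → g (i + t) = g (j - t) := by
        intro t
        induction t with
        | zero => intro _; simpa using heq
        | succ t ih =>
          intro ht
          have h1 := ih (by omega)
          have e2 : j - t = (j - (t+1)) + 1 := by omega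
          have hpar2 : Even (i + t) ↔ Even (j - (t+1)) := by
            rw [Nat.even_iff, Nat.even_iff]; omega
          have b2 := hback (j - (t+1))
          rw [← e2] at b2
          have b1 := hgs (i + t)
          by_cases hp : Even (i + t)
          · rw [if_pos hp] at b1
            rw [if_pos (hpar2.mp hp)] at b2
            rw [show i + (t+1) = (i + t) + 1 by omega, b1, b2, h1]
          · rw [if_neg hp] at b1
            rw [if_neg (fun hh => hp (hpar2.mpr hh))] at b2
            rw [show i + (t+1) = (i + t) + 1 by omega, b1, b2, h1]
      obtain ⟨s, hs⟩ : ∃ s, j - i = 2*s + 1 := ⟨(j - i)/2, by omega⟩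
      have h1 := hrefl s (by omega)
      rw [show j - s = (i + s) + 1 by omega] at h1
      exact hgne (i + s) h1
  -- the walk
  let c0 : G.Walk (g 0) (g k) := Walk.ofSeq g hgadj k
  let c : G.Walk x₀ x₀ := c0.copy hg0 hgk
  have hcedges : c.edges = (List.range k).map (fun t => s(g t, g (t+1))) := by
    simp [c, c0]
  have hcsupport : c.support = (List.range (k+1)).map g := by simp [c, c0]
  have hclen : c.length = k := by simp [c, c0]
  -- edges are distinct
  have key2 : ∀ i j, i < j → j < k → g i = g (j+1) → g (i+1) = g j → False := by
    intro i j hij hjk h1 h2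
    rcases Nat.eq_or_lt_of_le (show i + 1 ≤ j by omega) with heq | hlt
    · exact hgne2 i (by rw [show i + 2 = j + 1 by omega]; exact h1)
    · exact hginj (i+1) j hlt hjk h2
  have hnodupE : ((List.range k).map (fun t => s(g t, g (t+1)))).Nodup := by
    refine List.Nodup.map_on ?_ List.nodup_range
    intro i hi j hj hEq
    rw [List.mem_range] at hi hj
    rw [Sym2.eq_iff] at hEq
    rcases hEq with ⟨h1, h2⟩ | ⟨h1, h2⟩
    · rcases lt_trichotomy i j with h | h | h
      · exact absurd h1 (hginj i j h hj)
      · exact h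
      · exact absurd h1.symm (hginj j i h hi)
    · rcases lt_trichotomy i j with h | h | h
      · exact (key2 i j h hj h1 h2).elim
      · exact absurd (h ▸ h1 : g i = g (i+1)) (hgne i)
      · exact (key2 j i h hi h2.symm h1.symm).elim
  -- support tail nodup
  have hndsupp : c.support.tail.Nodup := by
    rw [hcsupport, List.range_succ_eq_map, List.map_cons, List.tail_cons, List.map_map]
    refine List.Nodup.map_on ?_ List.nodup_range
    intro i hi j hj hEq
    rw [List.mem_range] at hi hj
    simp only [Function.comp, Nat.succ_eq_add_one] at hEq
    rcases lt_trichotomy i j with h | h | h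
    · by_cases hjk : j + 1 < k
      · exact absurd hEq (hginj (i+1) (j+1) (by omega) hjk)
      · have hx : g (i+1) = x₀ := by rw [hEq, show j + 1 = k by omega, hgk]
        exact absurd (hg0.trans hx.symm) (hginj 0 (i+1) (by omega) (by omega))
    · exact h
    · by_cases hik : i + 1 < k
      · exact absurd hEq.symm (hginj (j+1) (i+1) (by omega) hik)
      · have hx : g (j+1) = x₀ := by rw [← hEq, show i + 1 = k by omega, hgk]
        exact absurd (hg0.trans hx.symm) (hginj 0 (j+1) (by omega) (by omega))
  -- c is a cycle
  have hcyc : c.IsCycle := by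
    refine ⟨⟨⟨?_⟩, ?_⟩, ?_⟩
    · rw [hcedges]; exact hnodupE
    · intro hnil
      rw [hnil] at hclen
      simp at hclen
      omega
    · exact hndsupp
  -- c is an alternating cycle
  have haltc : IsAltCycle M c := by
    refine ⟨hcyc, ?_, Or.inl ?_⟩
    · rw [Walk.length_edges, hclen, Nat.even_iff]; exact hkmod
    · intro i hilen
      have hik : i < k := by rwa [Walk.length_edges, hclen] at hilen
      have hgete : c.edges.get ⟨i, hilen⟩ = s(g i, g (i + 1)) := by
        rw [List.get_eq_getElem, List.getElem_of_eq hcedges, List.getElem_map, List.getElem_range]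
      rw [hgete]
      constructor
      · intro hin
        by_contra hodd
        exact ((hInv i).2 hodd).2 hin
      · intro hev
        exact ((hInv i).1 hev).1
  -- conclude
  have hecyc := hyp x₀ c haltc
  rw [hcedges] at hecyc
  obtain ⟨t, ht, hte⟩ := List.mem_map.mp hecyc
  by_cases hte2 : Even t
  · exact heM (hte ▸ ((hInv t).1 hte2).1)
  · exact heM' (hte ▸ ((hInv t).2 hte2).1)

end Aux

/-- An edge `e ∉ M` is an anti-forcing edge of `G` (i.e. `G - e`
has a unique perfect matching) iff every `M`-alternating cycle of `G` passes
through `e`. -/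
theorem statement2 (G : SimpleGraph V) (M : Set (Sym2 V)) (hM : IsPM G M)
    (e : Sym2 V) (he : e ∈ G.edgeSet) (heM : e ∉ M) :
    (∃ N, IsUniquePM (G.deleteEdges {e}) N) ↔
      ∀ (v : V) (c : G.Walk v v), IsAltCycle M c → e ∈ c.edges := by
  exact ⟨fun h => forward_dir G M hM e he heM h, fun h => backward_dir G M hM e he heM h⟩
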